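/- Let G be an undirected graph on N vertices with maximum degree κ, let μ₂ be the second-smallest eigenvalue of its Laplacian L = D − A, and let θ(G) = min{ |∂X|/|X| : X ⊆ V, 1 ≤ |X| ≤ N/2 } be the isoperimetric number, where |∂X| is the number of edges with exactly one endpoint in X. Then μ₂/2 ≤ θ(G) ≤ √(2·κ·μ₂). -/

import Mathlib

open Matrix Finset

private lemma dot_ones {N : ℕ} (y : Fin N → ℝ) : y ⬝ᵥ (fun _ => (1:ℝ)) = ∑ v, y v := by
  simp [dotProduct]

private lemma bcount {N : ℕ} (G : SimpleGraph (Fin N)) [DecidableRel G.Adj] (X : Finset (Fin N)) :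
    (∑ u : Fin N, ∑ v : Fin N, if G.Adj u v ∧ u ∈ X ∧ v ∉ X then (1:ℝ) else 0)
      = ((Finset.univ.filter
          (fun e : Fin N × Fin N => G.Adj e.1 e.2 ∧ e.1 ∈ X ∧ e.2 ∉ X)).card : ℝ) := by
  calc (∑ u : Fin N, ∑ v : Fin N, if G.Adj u v ∧ u ∈ X ∧ v ∉ X then (1:ℝ) else 0)
      = ∑ e : Fin N × Fin N, (if G.Adj e.1 e.2 ∧ e.1 ∈ X ∧ e.2 ∉ X then (1:ℝ) else 0) := by
        rw [Fintype.sum_prod_type]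
    _ = _ := by rw [← Finset.sum_filter, Finset.sum_const, nsmul_eq_mul, mul_one]

private lemma bcount' {N : ℕ} (G : SimpleGraph (Fin N)) [DecidableRel G.Adj] (X : Finset (Fin N)) :
    (∑ u : Fin N, ∑ v : Fin N, if G.Adj u v ∧ v ∈ X ∧ u ∉ X then (1:ℝ) else 0)
      = ((Finset.univ.filter
          (fun e : Fin N × Fin N => G.Adj e.1 e.2 ∧ e.1 ∈ X ∧ e.2 ∉ X)).card : ℝ) := by
  rw [Finset.sum_comm]
  have hswap : ∀ a b : Fin N, (if G.Adj b a ∧ a ∈ X ∧ b ∉ X then (1:ℝ) else 0)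
      = (if G.Adj a b ∧ a ∈ X ∧ b ∉ X then (1:ℝ) else 0) := by
    intro a b
    have hadj : G.Adj b a ↔ G.Adj a b := G.adj_comm b a
    simp only [hadj]
  simp only [hswap]
  exact bcount G X

private lemma sweep {N : ℕ} (G : SimpleGraph (Fin N)) [DecidableRel G.Adj] (θ : ℝ)
    (hlow : ∀ X : Finset (Fin N), X.Nonempty → 2 * X.card ≤ N →
      θ * X.card ≤ ((Finset.univ.filter
          (fun e : Fin N × Fin N => G.Adj e.1 e.2 ∧ e.1 ∈ X ∧ e.2 ∉ X)).card : ℝ)) :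
    ∀ (h : Fin N → ℝ), (∀ v, 0 ≤ h v) → 2 * (Finset.univ.filter (fun v => 0 < h v)).card ≤ N →
      θ * (2 * ∑ v, h v) ≤ ∑ u : Fin N, ∑ v : Fin N, if G.Adj u v then |h u - h v| else 0 := by
  suffices H : ∀ n : ℕ, ∀ (h : Fin N → ℝ), (∀ v, 0 ≤ h v) →
      2 * (Finset.univ.filter (fun v => 0 < h v)).card ≤ N →
      (Finset.univ.filter (fun v => 0 < h v)).card = n →
      θ * (2 * ∑ v, h v) ≤ ∑ u : Fin N, ∑ v : Fin N, if G.Adj u v then |h u - h v| else 0 by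
    intro h h1 h2; exact H _ h h1 h2 rfl
  intro n
  induction n using Nat.strong_induction_on with
  | _ n IH =>
    intro h hpos hcard hn
    set W := Finset.univ.filter (fun v => 0 < h v) with hWdef
    rcases W.eq_empty_or_nonempty with hW | hW
    · -- all zero
      have hz : ∀ v, h v = 0 := by
        intro v
        by_contra hne
        have : v ∈ W := by
          simp only [hWdef, mem_filter, mem_univ, true_and]
          exact lt_of_le_of_ne (hpos v) (Ne.symm hne)
        simp [hW] at this
      have : ∑ v, h v = 0 := by simp [hz]
      rw [this]
      have : ∀ u : Fin N, ∑ v : Fin N, (if G.Adj u v then |h u - h v| else 0) = 0 := by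
        intro u; apply Finset.sum_eq_zero; intro v _; simp [hz]
      simp [this]
    · obtain ⟨v0, hv0W, hv0min⟩ := W.exists_min_image h hW
      have hmemW : ∀ v, v ∈ W ↔ 0 < h v := by
        intro v; simp [hWdef]
      set t := h v0 with htdef
      have ht : 0 < t := (hmemW v0).mp hv0W
      set h' : Fin N → ℝ := fun v => if 0 < h v then h v - t else 0 with h'def
      have hge : ∀ v ∈ W, t ≤ h v := fun v hv => hv0min v hv
      have h'nonneg : ∀ v, 0 ≤ h' v := by
        intro v
        simp only [h'def]
        split
        · next hv => exact sub_nonneg.mpr (hge v ((hmemW v).mpr hv))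
        · exact le_refl 0
      have hzero : ∀ v, v ∉ W → h v = 0 := by
        intro v hv
        by_contra hne
        exact hv ((hmemW v).mpr (lt_of_le_of_ne (hpos v) (Ne.symm hne)))
      have hW'sub : (Finset.univ.filter (fun v => 0 < h' v)) ⊆ W.erase v0 := by
        intro v hv
        simp only [mem_filter, mem_univ, true_and] at hv
        have hv1 : 0 < h v := by
          by_contra hc
          simp only [h'def, if_neg hc] at hv
          exact lt_irrefl 0 hv
        simp only [h'def, if_pos hv1] at hv
        refine Finset.mem_erase.mpr ⟨?_, (hmemW v).mpr hv1⟩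
        intro hveq
        rw [hveq] at hv
        simp [htdef] at hv
      have hcardlt : (Finset.univ.filter (fun v => 0 < h' v)).card < n := by
        rw [← hn]
        exact lt_of_le_of_lt (Finset.card_le_card hW'sub) (Finset.card_erase_lt_of_mem hv0W)
      have hcard' : 2 * (Finset.univ.filter (fun v => 0 < h' v)).card ≤ N := by
        have := Finset.card_le_card hW'sub
        have h2 := Finset.card_erase_lt_of_mem hv0W
        omega
      have IH' := IH _ hcardlt h' h'nonneg hcard' rfl
      -- sums
      have hsum : ∑ v, h v = ∑ v ∈ W, h v := by
        rw [Finset.sum_filter_of_ne]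
        intro v _ hne
        exact lt_of_le_of_ne (hpos v) (Ne.symm hne)
      have hsum' : ∑ v, h' v = (∑ v ∈ W, h v) - t * W.card := by
        have e1 : ∑ v, h' v = ∑ v ∈ W, (h v - t) := by
          rw [Finset.sum_filter]
        rw [e1, Finset.sum_sub_distrib, Finset.sum_const, nsmul_eq_mul, mul_comm]
      have key : ∀ u v : Fin N, (if G.Adj u v then |h u - h v| else 0) =
          (if G.Adj u v then |h' u - h' v| else 0)
        + (if G.Adj u v ∧ u ∈ W ∧ v ∉ W then t else 0)
        + (if G.Adj u v ∧ v ∈ W ∧ u ∉ W then t else 0) := by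
        intro u v
        by_cases hadj : G.Adj u v
        · simp only [hadj, if_true, true_and]
          by_cases hu : u ∈ W <;> by_cases hv : v ∈ W
          · have hu' : 0 < h u := (hmemW u).mp hu
            have hv' : 0 < h v := (hmemW v).mp hv
            simp only [h'def, if_pos hu', if_pos hv', hu, hv, not_true, and_false,
              false_and, if_false, add_zero]
            congr 1
            ring
          · have hu' : 0 < h u := (hmemW u).mp hu
            have hv0 : h v = 0 := hzero v hv
            have hv' : ¬ 0 < h v := by rw [hv0]; exact lt_irrefl 0
            simp only [h'def, if_pos hu', if_neg hv', hu, hv, not_false_iff, and_self,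
              if_true, false_and, and_false, if_false, add_zero]
            rw [hv0, sub_zero, sub_zero, abs_of_nonneg (hpos u),
              abs_of_nonneg (sub_nonneg.mpr (hge u hu))]
            ring
          · have hv' : 0 < h v := (hmemW v).mp hv
            have hu0 : h u = 0 := hzero u hu
            have hu' : ¬ 0 < h u := by rw [hu0]; exact lt_irrefl 0
            simp only [h'def, if_pos hv', if_neg hu', hu, hv, not_false_iff, and_self,
              if_true, false_and, and_false, if_false, zero_add]
            rw [hu0, zero_sub, zero_sub, abs_neg, abs_neg, abs_of_nonneg (hpos v),
              abs_of_nonneg (sub_nonneg.mpr (hge v hv))]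
            ring
          · have hu0 : h u = 0 := hzero u hu
            have hv0 : h v = 0 := hzero v hv
            have hu' : ¬ 0 < h u := by rw [hu0]; exact lt_irrefl 0
            have hv' : ¬ 0 < h v := by rw [hv0]; exact lt_irrefl 0
            simp [h'def, hu0, hv0, hu', hv', hu, hv]
        · simp [hadj]
      set B : ℝ := ((Finset.univ.filter
          (fun e : Fin N × Fin N => G.Adj e.1 e.2 ∧ e.1 ∈ W ∧ e.2 ∉ W)).card : ℝ) with hBdef
      have hb1 : (∑ u : Fin N, ∑ v : Fin N, if G.Adj u v ∧ u ∈ W ∧ v ∉ W then t else 0)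
          = t * B := by
        calc (∑ u : Fin N, ∑ v : Fin N, if G.Adj u v ∧ u ∈ W ∧ v ∉ W then t else 0)
            = ∑ e : Fin N × Fin N, (if G.Adj e.1 e.2 ∧ e.1 ∈ W ∧ e.2 ∉ W then t else 0) := by
              rw [Fintype.sum_prod_type]
          _ = t * B := by
              rw [← Finset.sum_filter, Finset.sum_const, nsmul_eq_mul, mul_comm, hBdef]
      have hb2 : (∑ u : Fin N, ∑ v : Fin N, if G.Adj u v ∧ v ∈ W ∧ u ∉ W then t else 0)
          = t * B := by
        rw [Finset.sum_comm]
        have : ∀ a b : Fin N, (if G.Adj b a ∧ a ∈ W ∧ b ∉ W then t else 0)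
            = (if G.Adj a b ∧ a ∈ W ∧ b ∉ W then t else 0) := by
          intro a b
          have hadj : G.Adj b a ↔ G.Adj a b := G.adj_comm b a
          simp only [hadj]
        simp only [this]
        exact hb1
      have hsplit : (∑ u : Fin N, ∑ v : Fin N, if G.Adj u v then |h u - h v| else 0)
          = (∑ u : Fin N, ∑ v : Fin N, if G.Adj u v then |h' u - h' v| else 0)
            + t * B + t * B := by
        calc (∑ u : Fin N, ∑ v : Fin N, if G.Adj u v then |h u - h v| else 0)
            = ∑ u : Fin N, ∑ v : Fin N, ((if G.Adj u v then |h' u - h' v| else 0)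
              + (if G.Adj u v ∧ u ∈ W ∧ v ∉ W then t else 0)
              + (if G.Adj u v ∧ v ∈ W ∧ u ∉ W then t else 0)) := by
              apply Finset.sum_congr rfl; intro u _
              apply Finset.sum_congr rfl; intro v _
              exact key u v
          _ = _ := by
              simp only [Finset.sum_add_distrib]
              rw [hb1, hb2]
      have hBlow : θ * W.card ≤ B := hlow W hW hcard
      have hfin : θ * (2 * ∑ v, h v)
          = θ * (2 * ∑ v, h' v) + 2 * t * (θ * W.card) := by
        rw [hsum, hsum']
        ring
      rw [hfin, hsplit]
      have h2tB : 2 * t * (θ * W.card) ≤ t * B + t * B := by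
        have := mul_le_mul_of_nonneg_left hBlow (le_of_lt ht)
        nlinarith
      linarith [IH']


private lemma quadform_eq {N : ℕ} (G : SimpleGraph (Fin N)) [DecidableRel G.Adj] (x : Fin N → ℝ) :
    x ⬝ᵥ (G.lapMatrix ℝ *ᵥ x) =
      (∑ u : Fin N, ∑ v : Fin N, if G.Adj u v then (x u - x v)^2 else 0) / 2 := by
  rw [← Matrix.toLinearMap₂'_apply', SimpleGraph.lapMatrix_toLinearMap₂']

section spec

variable {N : ℕ} (G : SimpleGraph (Fin N)) [DecidableRel G.Adj]
  (q : Fin N → Fin N → ℝ) (μ : Fin N → ℝ)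

private lemma QtQ (horth : ∀ i j : Fin N, q i ⬝ᵥ q j = if i = j then (1 : ℝ) else 0) :
    (Matrix.of q)ᵀ * (Matrix.of q) = 1 := by
  rw [mul_eq_one_comm]
  ext i j
  rw [Matrix.mul_apply]
  simp only [Matrix.transpose_apply, Matrix.of_apply]
  rw [show (∑ k, q i k * q j k) = q i ⬝ᵥ q j from rfl, horth]
  simp [Matrix.one_apply]

private lemma dot_transpose (x y : Fin N → ℝ) :
    x ⬝ᵥ ((Matrix.of q)ᵀ *ᵥ y) = ((Matrix.of q) *ᵥ x) ⬝ᵥ y := by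
  rw [Matrix.dotProduct_mulVec, Matrix.vecMul_transpose]

private lemma norm_expand (horth : ∀ i j : Fin N, q i ⬝ᵥ q j = if i = j then (1 : ℝ) else 0)
    (x : Fin N → ℝ) :
    x ⬝ᵥ x = ∑ i : Fin N, ((Matrix.of q) *ᵥ x) i ^ 2 := by
  have h1 : x ⬝ᵥ x = ((Matrix.of q) *ᵥ x) ⬝ᵥ ((Matrix.of q) *ᵥ x) := by
    rw [← dot_transpose, Matrix.mulVec_mulVec, QtQ q horth, Matrix.one_mulVec]
  rw [h1, dotProduct]
  apply Finset.sum_congr rfl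
  intro i _
  ring

private lemma lap_decomp (heig : ∀ i : Fin N, (G.lapMatrix ℝ) *ᵥ q i = μ i • q i)
    (horth : ∀ i j : Fin N, q i ⬝ᵥ q j = if i = j then (1 : ℝ) else 0) :
    G.lapMatrix ℝ = (Matrix.of q)ᵀ * Matrix.diagonal μ * (Matrix.of q) := by
  have h1 : G.lapMatrix ℝ * (Matrix.of q)ᵀ = (Matrix.of q)ᵀ * Matrix.diagonal μ := by
    ext u j
    rw [Matrix.mul_apply, Matrix.mul_apply]
    have h2 : ∑ k, G.lapMatrix ℝ u k * (Matrix.of q)ᵀ k j = (G.lapMatrix ℝ *ᵥ q j) u := rfl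
    rw [h2, heig j]
    simp [Matrix.diagonal, Matrix.transpose_apply, Finset.sum_ite_eq, mul_comm]
  calc G.lapMatrix ℝ = G.lapMatrix ℝ * ((Matrix.of q)ᵀ * (Matrix.of q)) := by
        rw [QtQ q horth, Matrix.mul_one]
    _ = (G.lapMatrix ℝ * (Matrix.of q)ᵀ) * (Matrix.of q) := by rw [Matrix.mul_assoc]
    _ = (Matrix.of q)ᵀ * Matrix.diagonal μ * (Matrix.of q) := by rw [h1]

private lemma quad_expand (heig : ∀ i : Fin N, (G.lapMatrix ℝ) *ᵥ q i = μ i • q i)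
    (horth : ∀ i j : Fin N, q i ⬝ᵥ q j = if i = j then (1 : ℝ) else 0)
    (x : Fin N → ℝ) :
    x ⬝ᵥ (G.lapMatrix ℝ *ᵥ x) = ∑ i : Fin N, μ i * ((Matrix.of q) *ᵥ x) i ^ 2 := by
  rw [lap_decomp G q μ heig horth, ← Matrix.mulVec_mulVec, ← Matrix.mulVec_mulVec,
    dot_transpose, dotProduct]
  apply Finset.sum_congr rfl
  intro i _
  rw [Matrix.mulVec_diagonal]
  ring

end spec

section ray

variable {N : ℕ} (G : SimpleGraph (Fin N)) [DecidableRel G.Adj]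
  (q : Fin N → Fin N → ℝ) (μ : Fin N → ℝ)

private lemma eig_dot_one (heig : ∀ i : Fin N, (G.lapMatrix ℝ) *ᵥ q i = μ i • q i)
    (i : Fin N) (hμ : μ i ≠ 0) : q i ⬝ᵥ (fun _ => (1:ℝ)) = 0 := by
  have h0 : G.lapMatrix ℝ *ᵥ (fun _ => (1:ℝ)) = 0 :=
    SimpleGraph.lapMatrix_mulVec_const_eq_zero G
  have h1 : μ i * (q i ⬝ᵥ (fun _ => (1:ℝ))) = 0 := by
    have h2 : (μ i • q i) ⬝ᵥ (fun _ => (1:ℝ)) = μ i * (q i ⬝ᵥ (fun _ => (1:ℝ))) := by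
      rw [smul_dotProduct]; rfl
    rw [← h2, ← heig i, dotProduct_comm, Matrix.dotProduct_mulVec,
      ← Matrix.mulVec_transpose, (SimpleGraph.isSymm_lapMatrix ℝ G).eq, h0]
    simp
  exact (mul_eq_zero.mp h1).resolve_left hμ

private lemma mu_nonneg
    (horth : ∀ i j : Fin N, q i ⬝ᵥ q j = if i = j then (1 : ℝ) else 0)
    (heig : ∀ i : Fin N, (G.lapMatrix ℝ) *ᵥ q i = μ i • q i) (i : Fin N) : 0 ≤ μ i := by
  have h1 : q i ⬝ᵥ (G.lapMatrix ℝ *ᵥ q i) = μ i := by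
    rw [heig i, dotProduct_smul, horth i i]
    simp
  rw [← h1, quadform_eq]
  have : ∀ u : Fin N, 0 ≤ ∑ v : Fin N, (if G.Adj u v then (q i u - q i v)^2 else 0) := by
    intro u
    apply Finset.sum_nonneg
    intro v _
    positivity
  positivity

private lemma rayleigh (hN : 2 ≤ N)
    (horth : ∀ i j : Fin N, q i ⬝ᵥ q j = if i = j then (1 : ℝ) else 0)
    (heig : ∀ i : Fin N, (G.lapMatrix ℝ) *ᵥ q i = μ i • q i)
    (hmono : Monotone μ)
    (hμpos : 0 < μ ⟨1, by linarith⟩) (x : Fin N → ℝ) (hx : ∑ v, x v = 0) :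
    μ ⟨1, by linarith⟩ * (x ⬝ᵥ x) ≤ x ⬝ᵥ (G.lapMatrix ℝ *ᵥ x) := by
  have h0N : 0 < N := by omega
  set i0 : Fin N := ⟨0, h0N⟩ with hi0def
  set i1 : Fin N := ⟨1, by linarith⟩ with hi1def
  -- every eigenvector with index ≥ 1 is orthogonal to ones
  have hc : ∀ i : Fin N, i ≠ i0 → q i ⬝ᵥ (fun _ => (1:ℝ)) = 0 := by
    intro i hi
    have h1i : i1 ≤ i := by
      rw [Fin.le_def]
      have : (i : ℕ) ≠ 0 := fun h => hi (Fin.ext h)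
      simp only [hi1def]
      omega
    exact eig_dot_one G q μ heig i (by linarith [hmono h1i])
  -- ones is a multiple of q i0
  have hones : (fun _ => (1:ℝ)) = fun u => ((Matrix.of q) *ᵥ (fun _ => (1:ℝ))) i0 * q i0 u := by
    have h1 : (fun _ => (1:ℝ)) = ((Matrix.of q)ᵀ * (Matrix.of q)) *ᵥ (fun _ => (1:ℝ)) := by
      rw [QtQ q horth, Matrix.one_mulVec]
    conv_lhs => rw [h1, ← Matrix.mulVec_mulVec]
    funext u
    show ∑ i, (Matrix.of q)ᵀ u i * ((Matrix.of q) *ᵥ (fun _ => (1:ℝ))) i = _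
    rw [Finset.sum_eq_single i0]
    · simp [Matrix.transpose_apply, mul_comm]
    · intro i _ hi
      have : ((Matrix.of q) *ᵥ (fun _ => (1:ℝ))) i = 0 := hc i hi
      rw [this, mul_zero]
    · intro h; exact absurd (Finset.mem_univ i0) h
  set s : ℝ := ((Matrix.of q) *ᵥ (fun _ => (1:ℝ))) i0 with hsdef
  have hs : s ≠ 0 := by
    intro h
    have := congrFun hones i0
    rw [h] at this
    simp at this
  -- q i0 is orthogonal to x
  have hc0 : ((Matrix.of q) *ᵥ x) i0 = 0 := by
    have h1 : s * (q i0 ⬝ᵥ x) = 0 := by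
      have h2 : (fun u => s * q i0 u) ⬝ᵥ x = s * (q i0 ⬝ᵥ x) := by
        simp only [dotProduct, Finset.mul_sum, mul_assoc]
      rw [← h2, ← hones]
      show ∑ u, 1 * x u = 0
      simpa using hx
    have := (mul_eq_zero.mp h1).resolve_left hs
    exact this
  rw [quad_expand G q μ heig horth x, norm_expand q horth x, Finset.mul_sum]
  apply Finset.sum_le_sum
  intro i _
  by_cases hi : i = i0
  · subst hi
    rw [hc0]
    simp
  · have h1i : i1 ≤ i := by
      rw [Fin.le_def]
      have : (i : ℕ) ≠ 0 := fun h => hi (Fin.ext h)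
      simp only [hi1def]
      omega
    exact mul_le_mul_of_nonneg_right (hmono h1i) (sq_nonneg _)

end ray


private lemma sign_select {N : ℕ} (f0 : Fin N → ℝ) (hsum : ∑ v, f0 v = 0) (hne : f0 ≠ 0) :
    ∃ ε : ℝ, (ε = 1 ∨ ε = -1) ∧ (Finset.univ.filter (fun v => 0 < ε * f0 v)).Nonempty ∧
      2 * (Finset.univ.filter (fun v => 0 < ε * f0 v)).card ≤ N := by
  set P := Finset.univ.filter (fun v => 0 < f0 v) with hPdef
  set Ng := Finset.univ.filter (fun v => f0 v < 0) with hNgdef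
  have hPne : P.Nonempty := by
    by_contra hP
    rw [Finset.not_nonempty_iff_eq_empty] at hP
    have hle : ∀ v ∈ Finset.univ, f0 v ≤ 0 := by
      intro v _
      by_contra hv
      have : v ∈ P := by
        simp only [hPdef, mem_filter, mem_univ, true_and]
        exact lt_of_not_ge hv
      simp [hP] at this
    have := (Finset.sum_eq_zero_iff_of_nonpos hle).mp hsum
    exact hne (funext fun v => this v (Finset.mem_univ v))
  have hNgne : Ng.Nonempty := by
    by_contra hP
    rw [Finset.not_nonempty_iff_eq_empty] at hP
    have hle : ∀ v ∈ Finset.univ, 0 ≤ f0 v := by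
      intro v _
      by_contra hv
      have : v ∈ Ng := by
        simp only [hNgdef, mem_filter, mem_univ, true_and]
        exact lt_of_not_ge hv
      simp [hP] at this
    have := (Finset.sum_eq_zero_iff_of_nonneg hle).mp hsum
    exact hne (funext fun v => this v (Finset.mem_univ v))
  have hdisj : Disjoint P Ng := by
    rw [Finset.disjoint_left]
    intro v hvP hvNg
    simp only [hPdef, mem_filter, mem_univ, true_and] at hvP
    simp only [hNgdef, mem_filter, mem_univ, true_and] at hvNg
    linarith
  have hcard : P.card + Ng.card ≤ N := by
    rw [← Finset.card_union_of_disjoint hdisj]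
    calc (P ∪ Ng).card ≤ (Finset.univ : Finset (Fin N)).card := Finset.card_le_univ _
      _ = N := by simp
  by_cases h2P : 2 * P.card ≤ N
  · refine ⟨1, Or.inl rfl, ?_, ?_⟩
    · have : Finset.univ.filter (fun v => 0 < 1 * f0 v) = P := by
        apply Finset.filter_congr
        intro v _
        simp
      rw [this]; exact hPne
    · have : Finset.univ.filter (fun v => 0 < 1 * f0 v) = P := by
        apply Finset.filter_congr
        intro v _
        simp
      rw [this]; exact h2P
  · refine ⟨-1, Or.inr rfl, ?_, ?_⟩
    · have : Finset.univ.filter (fun v => 0 < (-1) * f0 v) = Ng := by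
        apply Finset.filter_congr
        intro v _
        constructor <;> intro h <;> simp_all <;> linarith
      rw [this]; exact hNgne
    · have : Finset.univ.filter (fun v => 0 < (-1) * f0 v) = Ng := by
        apply Finset.filter_congr
        intro v _
        constructor <;> intro h <;> simp_all <;> linarith
      rw [this]
      omega


private lemma exists_f {N : ℕ} (hN : 2 ≤ N) (G : SimpleGraph (Fin N)) [DecidableRel G.Adj]
    (q : Fin N → Fin N → ℝ) (μ : Fin N → ℝ)
    (horth : ∀ i j : Fin N, q i ⬝ᵥ q j = if i = j then (1 : ℝ) else 0)
    (heig : ∀ i : Fin N, (G.lapMatrix ℝ) *ᵥ q i = μ i • q i)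
    (hmono : Monotone μ) :
    ∃ f : Fin N → ℝ, G.lapMatrix ℝ *ᵥ f = μ ⟨1, by linarith⟩ • f ∧ (∑ v, f v = 0) ∧
      (Finset.univ.filter (fun v => 0 < f v)).Nonempty ∧
      2 * (Finset.univ.filter (fun v => 0 < f v)).card ≤ N := by
  set i0 : Fin N := ⟨0, by omega⟩ with hi0def
  set i1 : Fin N := ⟨1, by linarith⟩ with hi1def
  suffices h : ∃ f0 : Fin N → ℝ, (G.lapMatrix ℝ *ᵥ f0 = μ i1 • f0) ∧ (∑ v, f0 v = 0) ∧ f0 ≠ 0 by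
    obtain ⟨f0, hf1, hf2, hf3⟩ := h
    obtain ⟨ε, hε, hne, hcard⟩ := sign_select f0 hf2 hf3
    refine ⟨fun v => ε * f0 v, ?_, ?_, hne, hcard⟩
    · have he : (fun v => ε * f0 v) = ε • f0 := rfl
      rw [he, Matrix.mulVec_smul, hf1, smul_comm]
    · rw [← Finset.mul_sum, hf2, mul_zero]
  rcases eq_or_lt_of_le (mu_nonneg G q μ horth heig i1) with hz | hpos
  · -- μ i1 = 0
    have hμ1 : μ i1 = 0 := hz.symm
    have h01 : μ i0 ≤ μ i1 := hmono (by simp [hi0def, hi1def, Fin.le_def])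
    have hμ0 : μ i0 = 0 := le_antisymm (hμ1 ▸ h01) (mu_nonneg G q μ horth heig i0)
    set s0 : ℝ := ∑ v, q i0 v with hs0def
    set s1 : ℝ := ∑ v, q i1 v with hs1def
    by_cases hs1 : s1 = 0
    · exact ⟨q i1, heig i1, hs1, fun h => by simpa [h] using horth i1 i1⟩
    · refine ⟨fun v => s1 * q i0 v - s0 * q i1 v, ?_, ?_, ?_⟩
      · have he : (fun v => s1 * q i0 v - s0 * q i1 v) = s1 • q i0 - s0 • q i1 := rfl
        rw [he, Matrix.mulVec_sub, Matrix.mulVec_smul, Matrix.mulVec_smul, heig i0, heig i1,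
          hμ0, hμ1]
        simp
      · simp only [Finset.sum_sub_distrib, ← Finset.mul_sum]
        show s1 * s0 - s0 * s1 = 0
        ring
      · intro h
        have h2 : q i0 ⬝ᵥ (fun v => s1 * q i0 v - s0 * q i1 v) = s1 := by
          have e1 : ∀ v, q i0 v * (s1 * q i0 v - s0 * q i1 v)
              = s1 * (q i0 v * q i0 v) - s0 * (q i0 v * q i1 v) := fun v => by ring
          show (∑ v, q i0 v * (s1 * q i0 v - s0 * q i1 v)) = s1
          simp only [e1, Finset.sum_sub_distrib, ← Finset.mul_sum]
          have e2 : (∑ v, q i0 v * q i0 v) = q i0 ⬝ᵥ q i0 := rfl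
          have e3 : (∑ v, q i0 v * q i1 v) = q i0 ⬝ᵥ q i1 := rfl
          rw [e2, e3, horth i0 i0, horth i0 i1]
          have hne01 : i0 ≠ i1 := by simp [hi0def, hi1def, Fin.ext_iff]
          simp [hne01]
        rw [h] at h2
        simp at h2
        exact hs1 h2.symm
  · -- μ i1 > 0
    refine ⟨q i1, heig i1, ?_, fun h => by simpa [h] using horth i1 i1⟩
    rw [← dot_ones]
    exact eig_dot_one G q μ heig i1 (ne_of_gt hpos)

set_option maxHeartbeats 1600000 in
/-- Let `G` be a graph on `N` vertices with maximum degree `κ`, let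
`μ₂` be the second-smallest eigenvalue of its Laplacian `L = D − A` (orthonormal
eigenbasis `q`, nondecreasing eigenvalues `μ`), and let
`θ(G) = min{|∂X|/|X| : ∅ ≠ X ⊆ V, |X| ≤ N/2}` be the isoperimetric number, where
`|∂X|` counts edges with exactly one endpoint in `X`. Then `μ₂/2 ≤ θ(G) ≤ √(2κμ₂)`. -/
theorem statement16 {N : ℕ} (hN : 2 ≤ N) (G : SimpleGraph (Fin N)) [DecidableRel G.Adj]
    (κ : ℕ) (hdeg : ∀ v : Fin N, G.degree v ≤ κ)
    (q : Fin N → Fin N → ℝ) (μ : Fin N → ℝ)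
    (horth : ∀ i j : Fin N, q i ⬝ᵥ q j = if i = j then (1 : ℝ) else 0)
    (heig : ∀ i : Fin N, (G.lapMatrix ℝ) *ᵥ q i = μ i • q i)
    (hmono : Monotone μ)
    (θ : ℝ)
    (hθ : IsLeast
      {r : ℝ | ∃ X : Finset (Fin N), X.Nonempty ∧ 2 * X.card ≤ N ∧
        r = ((Finset.univ.filter
              (fun e : Fin N × Fin N => G.Adj e.1 e.2 ∧ e.1 ∈ X ∧ e.2 ∉ X)).card : ℝ) /
            (X.card : ℝ)} θ) :
    μ ⟨1, by omega⟩ / 2 ≤ θ ∧ θ ≤ Real.sqrt (2 * κ * μ ⟨1, by omega⟩) := by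
  have hi1 : (⟨1, by omega⟩ : Fin N) = ⟨1, by omega⟩ := rfl
  set i1 : Fin N := ⟨1, by omega⟩ with hi1def
  have hμ1nonneg : 0 ≤ μ i1 := mu_nonneg G q μ horth heig i1
  obtain ⟨X0, hX0ne, hX0card, hX0eq⟩ := hθ.1
  have hB0nonneg : (0:ℝ) ≤ ((Finset.univ.filter
      (fun e : Fin N × Fin N => G.Adj e.1 e.2 ∧ e.1 ∈ X0 ∧ e.2 ∉ X0)).card : ℝ) :=
    Nat.cast_nonneg _
  have hθnonneg : 0 ≤ θ := by
    rw [hX0eq]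
    positivity
  constructor
  · -- lower bound μ₂/2 ≤ θ
    rcases le_or_gt (μ i1) 0 with hle | hμpos
    · linarith
    set B0 : ℝ := ((Finset.univ.filter
        (fun e : Fin N × Fin N => G.Adj e.1 e.2 ∧ e.1 ∈ X0 ∧ e.2 ∉ X0)).card : ℝ) with hB0def
    set k := X0.card with hkdef
    have hk0 : 0 < k := Finset.card_pos.mpr hX0ne
    have hkR : (0:ℝ) < (k:ℝ) := by exact_mod_cast hk0
    have hkN : k < N := by omega
    set x : Fin N → ℝ := fun v => if v ∈ X0 then (N:ℝ) - k else -(k:ℝ) with hxdef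
    have hsplit : ∀ a b : ℝ, (∑ v : Fin N, if v ∈ X0 then a else b)
        = k * a + ((N:ℝ) - k) * b := by
      intro a b
      rw [← Finset.sum_add_sum_compl X0 (fun v => if v ∈ X0 then a else b)]
      have e1 : (∑ v ∈ X0, if v ∈ X0 then a else b) = (k:ℝ) * a := by
        rw [Finset.sum_congr rfl (fun v hv => if_pos hv), Finset.sum_const, nsmul_eq_mul]
      have e2 : (∑ v ∈ X0ᶜ, if v ∈ X0 then a else b) = ((N:ℝ) - k) * b := by
        rw [Finset.sum_congr rfl (fun v hv => if_neg (Finset.mem_compl.mp hv)),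
          Finset.sum_const, nsmul_eq_mul, Finset.card_compl]
        congr 1
        rw [Fintype.card_fin]
        rw [Nat.cast_sub (le_of_lt hkN)]
      rw [e1, e2]
    have hx0 : ∑ v, x v = 0 := by
      rw [hxdef, hsplit]
      ring
    have hxx : x ⬝ᵥ x = (k:ℝ) * ((N:ℝ) - k) * N := by
      have e1 : ∀ v, x v * x v = if v ∈ X0 then ((N:ℝ)-k)^2 else ((k:ℝ))^2 := by
        intro v
        by_cases hv : v ∈ X0 <;> simp [hxdef, hv] <;> ring
      show (∑ v, x v * x v) = _
      simp only [e1]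
      rw [hsplit]
      ring
    have hquad : x ⬝ᵥ (G.lapMatrix ℝ *ᵥ x) = (N:ℝ)^2 * B0 := by
      rw [quadform_eq]
      have key2 : ∀ u v : Fin N, (if G.Adj u v then (x u - x v)^2 else 0)
          = (N:ℝ)^2 * ((if G.Adj u v ∧ u ∈ X0 ∧ v ∉ X0 then (1:ℝ) else 0)
            + (if G.Adj u v ∧ v ∈ X0 ∧ u ∉ X0 then (1:ℝ) else 0)) := by
        intro u v
        by_cases hadj : G.Adj u v
        · by_cases hu : u ∈ X0 <;> by_cases hv : v ∈ X0 <;>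
            simp [hxdef, hadj, hu, hv] <;> ring
        · simp [hadj]
      simp only [key2]
      simp only [← Finset.mul_sum, Finset.sum_add_distrib]
      rw [bcount G X0, bcount' G X0, ← hB0def]
      ring
    have hray := rayleigh G q μ hN horth heig hmono (by rw [← hi1def]; exact hμpos) x hx0
    rw [← hi1def] at hray
    rw [hxx, hquad] at hray
    -- conclude
    rw [hX0eq, div_le_div_iff₀ (by norm_num : (0:ℝ) < 2) hkR]
    have hNk : (0:ℝ) < (N:ℝ) - k := by
      have : (k:ℝ) < (N:ℝ) := by exact_mod_cast hkN
      linarith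
    have hNpos : (0:ℝ) < (N:ℝ) := by positivity
    have h2k : 2 * (k:ℝ) ≤ (N:ℝ) := by exact_mod_cast hX0card
    have h1 : (N:ℝ)^2 * B0 ≤ 2 * ((N:ℝ) - k) * N * B0 := by
      nlinarith [mul_nonneg hB0nonneg hNpos.le]
    apply le_of_mul_le_mul_right _ (mul_pos hNk hNpos)
    nlinarith [hray, h1]
  ·
    -- upper bound θ ≤ √(2κμ₂)
    have hlow : ∀ X : Finset (Fin N), X.Nonempty → 2 * X.card ≤ N →
        θ * X.card ≤ ((Finset.univ.filter
          (fun e : Fin N × Fin N => G.Adj e.1 e.2 ∧ e.1 ∈ X ∧ e.2 ∉ X)).card : ℝ) := by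
      intro X h1 h2
      have hmem : θ ≤ ((Finset.univ.filter
          (fun e : Fin N × Fin N => G.Adj e.1 e.2 ∧ e.1 ∈ X ∧ e.2 ∉ X)).card : ℝ) / X.card :=
        hθ.2 ⟨X, h1, h2, rfl⟩
      have hc : (0:ℝ) < (X.card : ℝ) := by exact_mod_cast Finset.card_pos.mpr h1
      exact (le_div_iff₀ hc).mp hmem
    obtain ⟨f, hf1, hf2, hWne, hWcard⟩ := exists_f hN G q μ horth heig hmono
    rw [← hi1def] at hf1
    set g : Fin N → ℝ := fun v => max (f v) 0 with hgdef
    have hgnonneg : ∀ v, 0 ≤ g v := fun v => le_max_right _ _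
    have hgf : ∀ v, (0 < g v ↔ 0 < f v) := by
      intro v
      simp [hgdef, lt_max_iff]
    set h : Fin N → ℝ := fun v => g v ^ 2 with hhdef
    have hhnonneg : ∀ v, 0 ≤ h v := fun v => sq_nonneg _
    have hfilter : Finset.univ.filter (fun v => 0 < h v)
        = Finset.univ.filter (fun v => 0 < f v) := by
      apply Finset.filter_congr
      intro v _
      constructor
      · intro h2
        have hne : g v ≠ 0 := by
          intro e
          rw [hhdef] at h2
          simp only at h2
          rw [e] at h2
          simp at h2
        exact (hgf v).mp (lt_of_le_of_ne (hgnonneg v) (Ne.symm hne))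
      · intro h2
        exact pow_pos ((hgf v).mpr h2) 2
    have hSpos : 0 < ∑ v, h v := by
      obtain ⟨v0, hv0⟩ := hWne
      rw [← hfilter] at hv0
      simp only [Finset.mem_filter, Finset.mem_univ, true_and] at hv0
      exact Finset.sum_pos' (fun v _ => hhnonneg v) ⟨v0, Finset.mem_univ v0, hv0⟩
    have hsweep := sweep G θ hlow h hhnonneg (by rw [hfilter]; exact hWcard)
    set S : ℝ := ∑ v, h v with hSdef
    -- Cauchy-Schwarz
    set A : ℝ := ∑ u : Fin N, ∑ v : Fin N, if G.Adj u v then (g u - g v)^2 else 0 with hAdef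
    set C : ℝ := ∑ u : Fin N, ∑ v : Fin N, if G.Adj u v then (g u + g v)^2 else 0 with hCdef
    have hAnonneg : 0 ≤ A := by
      rw [hAdef]
      apply Finset.sum_nonneg
      intro u _
      apply Finset.sum_nonneg
      intro v _
      positivity
    have hCS : (∑ u : Fin N, ∑ v : Fin N, if G.Adj u v then |h u - h v| else 0)
        ≤ Real.sqrt A * Real.sqrt C := by
      set a : Fin N × Fin N → ℝ :=
        fun e => if G.Adj e.1 e.2 then |g e.1 - g e.2| else 0 with hadef
      set b : Fin N × Fin N → ℝ :=
        fun e => if G.Adj e.1 e.2 then (g e.1 + g e.2) else 0 with hbdef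
      have h1 : (∑ u : Fin N, ∑ v : Fin N, if G.Adj u v then |h u - h v| else 0)
          = ∑ e : Fin N × Fin N, a e * b e := by
        rw [Fintype.sum_prod_type]
        apply Finset.sum_congr rfl
        intro u _
        apply Finset.sum_congr rfl
        intro v _
        rw [hadef, hbdef]
        by_cases hadj : G.Adj u v
        · simp only [hadj, if_true, hhdef]
          rw [show g u ^ 2 - g v ^ 2 = (g u - g v) * (g u + g v) by ring, abs_mul,
            abs_of_nonneg (by positivity : (0:ℝ) ≤ g u + g v)]
        · simp [hadj]
      have ha2 : (∑ e : Fin N × Fin N, a e ^ 2) = A := by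
        rw [hAdef, Fintype.sum_prod_type]
        apply Finset.sum_congr rfl
        intro u _
        apply Finset.sum_congr rfl
        intro v _
        rw [hadef]
        by_cases hadj : G.Adj u v <;> simp [hadj, sq_abs]
      have hb2 : (∑ e : Fin N × Fin N, b e ^ 2) = C := by
        rw [hCdef, Fintype.sum_prod_type]
        apply Finset.sum_congr rfl
        intro u _
        apply Finset.sum_congr rfl
        intro v _
        rw [hbdef]
        by_cases hadj : G.Adj u v <;> simp [hadj]
      have hkey := Finset.sum_mul_sq_le_sq_mul_sq Finset.univ a b
      rw [ha2, hb2] at hkey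
      have hab : 0 ≤ ∑ e : Fin N × Fin N, a e * b e := by
        apply Finset.sum_nonneg
        intro e _
        rw [hadef, hbdef]
        by_cases hadj : G.Adj e.1 e.2 <;> simp [hadj]
        positivity
      rw [h1, ← Real.sqrt_sq hab, ← Real.sqrt_mul hAnonneg]
      exact Real.sqrt_le_sqrt hkey
    -- relate A to quadratic form
    have hA : A = 2 * (g ⬝ᵥ (G.lapMatrix ℝ *ᵥ g)) := by
      have := quadform_eq G g
      rw [← hAdef] at this
      linarith
    -- key inequality: g^T L g ≤ μ₂ ‖g‖²
    have hgg : g ⬝ᵥ g = S := by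
      rw [hSdef]
      apply Finset.sum_congr rfl
      intro v _
      rw [hhdef]
      ring
    have hgLg : g ⬝ᵥ (G.lapMatrix ℝ *ᵥ g) ≤ μ i1 * S := by
      set n : Fin N → ℝ := fun v => f v - g v with hndef
      have hn_nonpos : ∀ v, n v ≤ 0 := by
        intro v
        rw [hndef]
        simp only [sub_nonpos, hgdef]
        exact le_max_left _ _
      have hgn : ∀ v, 0 < f v → n v = 0 := by
        intro v hv
        rw [hndef]
        simp only [hgdef, max_eq_left hv.le, sub_self]
      have hgzero : ∀ v, ¬ 0 < f v → g v = 0 := by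
        intro v hv
        rw [hgdef]
        exact max_eq_right (le_of_not_gt hv)
      have hLn : 0 ≤ g ⬝ᵥ (G.lapMatrix ℝ *ᵥ n) := by
        show 0 ≤ ∑ v, g v * (G.lapMatrix ℝ *ᵥ n) v
        apply Finset.sum_nonneg
        intro v _
        rw [SimpleGraph.lapMatrix_mulVec_apply, mul_sub]
        have e1 : g v * ((G.degree v : ℝ) * n v) = 0 := by
          by_cases hv : 0 < f v
          · rw [hgn v hv, mul_zero, mul_zero]
          · rw [hgzero v hv, zero_mul]
        rw [e1, zero_sub, neg_nonneg]
        exact mul_nonpos_of_nonneg_of_nonpos (hgnonneg v)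
          (Finset.sum_nonpos (fun u _ => hn_nonpos u))
      have hfgn : g = f - n := by
        funext v
        show g v = f v - n v
        rw [hndef]
        ring
      have e2 : g ⬝ᵥ (G.lapMatrix ℝ *ᵥ g) = g ⬝ᵥ (G.lapMatrix ℝ *ᵥ f) -
          g ⬝ᵥ (G.lapMatrix ℝ *ᵥ n) := by
        have e2a : G.lapMatrix ℝ *ᵥ g = G.lapMatrix ℝ *ᵥ f - G.lapMatrix ℝ *ᵥ n := by
          conv_lhs => rw [hfgn]
          rw [Matrix.mulVec_sub]
        rw [e2a, dotProduct_sub]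
      have e3 : g ⬝ᵥ (G.lapMatrix ℝ *ᵥ f) = μ i1 * S := by
        rw [hf1, dotProduct_smul, smul_eq_mul, ← hgg]
        congr 1
        apply Finset.sum_congr rfl
        intro v _
        by_cases hv : 0 < f v
        · have : g v = f v := max_eq_left hv.le
          rw [this]
        · rw [hgzero v hv, zero_mul, zero_mul]
      rw [e2, e3]
      linarith
    -- degree bound
    have hC : C ≤ 4 * (κ:ℝ) * S := by
      have h5a : ∀ u : Fin N, (∑ v : Fin N, if G.Adj u v then (g u)^2 else 0)
          = (G.degree u : ℝ) * (g u)^2 := by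
        intro u
        calc (∑ v : Fin N, if G.Adj u v then (g u)^2 else 0)
            = ∑ v : Fin N, (if G.Adj u v then (1:ℝ) else 0) * (g u)^2 := by
              apply Finset.sum_congr rfl
              intro v _
              by_cases hadj : G.Adj u v <;> simp [hadj]
          _ = (∑ v : Fin N, if G.Adj u v then (1:ℝ) else 0) * (g u)^2 :=
              (Finset.sum_mul _ _ _).symm
          _ = (G.degree u : ℝ) * (g u)^2 := by
              rw [← SimpleGraph.degree_eq_sum_if_adj]
      have hstep1 : C ≤ ∑ u : Fin N, ∑ v : Fin N,
          ((if G.Adj u v then 2 * (g u)^2 else 0) + (if G.Adj u v then 2 * (g v)^2 else 0)) := by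
        rw [hCdef]
        apply Finset.sum_le_sum
        intro u _
        apply Finset.sum_le_sum
        intro v _
        by_cases hadj : G.Adj u v <;> simp [hadj]
        nlinarith [sq_nonneg (g u - g v)]
      have hsym : (∑ u : Fin N, ∑ v : Fin N, if G.Adj u v then 2 * (g v)^2 else 0)
          = ∑ u : Fin N, ∑ v : Fin N, if G.Adj u v then 2 * (g u)^2 else 0 := by
        rw [Finset.sum_comm]
        apply Finset.sum_congr rfl
        intro u _
        apply Finset.sum_congr rfl
        intro v _
        have hadj : G.Adj v u ↔ G.Adj u v := G.adj_comm v u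
        simp only [hadj]
      have hdegsum : (∑ u : Fin N, ∑ v : Fin N, if G.Adj u v then 2 * (g u)^2 else 0)
          ≤ 2 * (κ:ℝ) * S := by
        have e4 : ∀ u : Fin N, (∑ v : Fin N, if G.Adj u v then 2 * (g u)^2 else 0)
            = 2 * ((G.degree u : ℝ) * (g u)^2) := by
          intro u
          rw [← h5a u, Finset.mul_sum]
          apply Finset.sum_congr rfl
          intro v _
          by_cases hadj : G.Adj u v <;> simp [hadj]
        simp only [e4]
        rw [hSdef, Finset.mul_sum]
        apply Finset.sum_le_sum
        intro u _
        have hd : (G.degree u : ℝ) ≤ (κ:ℝ) := by exact_mod_cast hdeg u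
        show 2 * ((G.degree u : ℝ) * g u ^ 2) ≤ 2 * (κ:ℝ) * g u ^ 2
        nlinarith [sq_nonneg (g u)]
      calc C ≤ _ := hstep1
        _ = (∑ u : Fin N, ∑ v : Fin N, if G.Adj u v then 2 * (g u)^2 else 0)
            + (∑ u : Fin N, ∑ v : Fin N, if G.Adj u v then 2 * (g v)^2 else 0) := by
            rw [← Finset.sum_add_distrib]
            apply Finset.sum_congr rfl
            intro u _
            rw [← Finset.sum_add_distrib]
        _ = 2 * (∑ u : Fin N, ∑ v : Fin N, if G.Adj u v then 2 * (g u)^2 else 0) := by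
            rw [hsym]; ring
        _ ≤ 2 * (2 * (κ:ℝ) * S) := by linarith [hdegsum]
        _ = 4 * (κ:ℝ) * S := by ring
    -- put everything together
    have hCnonneg : 0 ≤ C := by
      rw [hCdef]
      apply Finset.sum_nonneg
      intro u _
      apply Finset.sum_nonneg
      intro v _
      positivity
    have hA2 : A ≤ 2 * μ i1 * S := by
      rw [hA]
      linarith [hgLg]
    have hsq1 : Real.sqrt A ≤ Real.sqrt (2 * μ i1 * S) := Real.sqrt_le_sqrt hA2
    have hsq2 : Real.sqrt C ≤ Real.sqrt (4 * (κ:ℝ) * S) := Real.sqrt_le_sqrt hC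
    have hprod : Real.sqrt (2 * μ i1 * S) * Real.sqrt (4 * (κ:ℝ) * S)
        = 2 * S * Real.sqrt (2 * (κ:ℝ) * μ i1) := by
      rw [← Real.sqrt_mul (by positivity)]
      rw [show 2 * μ i1 * S * (4 * (κ:ℝ) * S) = (2*S)^2 * (2 * (κ:ℝ) * μ i1) by ring]
      rw [Real.sqrt_mul (sq_nonneg _), Real.sqrt_sq (by positivity)]
    have hfinal : θ * (2 * S) ≤ 2 * S * Real.sqrt (2 * (κ:ℝ) * μ i1) := by
      calc θ * (2 * S) ≤ _ := hsweep
        _ ≤ Real.sqrt A * Real.sqrt C := hCS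
        _ ≤ Real.sqrt (2 * μ i1 * S) * Real.sqrt (4 * (κ:ℝ) * S) := by
            apply mul_le_mul hsq1 hsq2 (Real.sqrt_nonneg _) (Real.sqrt_nonneg _)
        _ = 2 * S * Real.sqrt (2 * (κ:ℝ) * μ i1) := hprod
    have h2S : (0:ℝ) < 2 * S := by linarith
    have hfin2 : (2 * S) * θ ≤ (2 * S) * Real.sqrt (2 * (κ:ℝ) * μ i1) := by
      linarith [hfinal]
    exact le_of_mul_le_mul_left hfin2 h2S
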